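/- If all entries of a data table D are rational numbers, then D admits a deterministic ontological factorization over a finite number of ontic states: there exist finite Ω, a column-stochastic Ω×s matrix P with rational entries, and column-stochastic 0/1 matrices M^(x) with M^(x)P = D^(x) for all x. -/

import Mathlib

open Finset

/-- A matrix is column-stochastic: nonnegative entries and each column sums to 1. -/
def ColStoch {R C : Type*} [Fintype R] (A : Matrix R C ℝ) : Prop :=
  (∀ i j, 0 ≤ A i j) ∧ ∀ j, ∑ i, A i j = 1

lemma sum_fun_prod {m d : ℕ} (g : Fin m → Fin d → ℝ) :
    ∑ f : Fin m → Fin d, ∏ y, g y (f y) = ∏ y, ∑ i, g y i := by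
  rw [Finset.prod_univ_sum]
  rw [Fintype.piFinset_univ]

set_option maxHeartbeats 1000000 in
/-- If all entries of a data table are rational, it admits a deterministic ontological
factorization over a finite number of ontic states. -/
theorem stmt_9 (s d m : ℕ) (D : Fin m → Matrix (Fin d) (Fin s) ℝ)
    (hD : ∀ x, ColStoch (D x))
    (hrat : ∀ x i k, ∃ q : ℚ, D x i k = (q : ℝ)) :
    ∃ (Ω : ℕ) (P : Matrix (Fin Ω) (Fin s) ℝ) (M : Fin m → Matrix (Fin d) (Fin Ω) ℝ),
      ColStoch P ∧ (∀ j k, ∃ q : ℚ, P j k = (q : ℝ)) ∧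
      (∀ x, ColStoch (M x)) ∧
      (∀ x i j, M x i j = 0 ∨ M x i j = 1) ∧
      (∀ x, M x * P = D x) := by
  classical
  set T := Fin s × (Fin m → Fin d) with hT
  set Ω := Fintype.card T with hΩ
  set e : Fin Ω ≃ T := (Fintype.equivFin T).symm with he
  have key : ∀ (k : Fin s) (g : Fin m → Fin d → ℝ),
      (∑ j : Fin Ω, if (e j).1 = k then ∏ y, g y ((e j).2 y) else 0)
        = ∏ y, ∑ i, g y i := by
    intro k g
    rw [Equiv.sum_comp e (fun p : T => if p.1 = k then ∏ y, g y (p.2 y) else 0)]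
    rw [Fintype.sum_prod_type]
    have : ∀ k' : Fin s,
        (∑ f : Fin m → Fin d, if k' = k then ∏ y, g y (f y) else 0)
          = if k' = k then ∑ f : Fin m → Fin d, ∏ y, g y (f y) else 0 := by
      intro k'; split <;> simp
    simp only [this]
    rw [Finset.sum_ite_eq' Finset.univ k
      (fun _ => ∑ f : Fin m → Fin d, ∏ y, g y (f y))]
    simp [sum_fun_prod g]
  refine ⟨Ω,
    fun j k => if (e j).1 = k then ∏ y, D y ((e j).2 y) k else 0,
    fun x i j => if (e j).2 x = i then 1 else 0, ?_, ?_, ?_, ?_, ?_⟩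
  · constructor
    · intro j k
      dsimp only
      split
      · exact Finset.prod_nonneg fun y _ => (hD y).1 _ _
      · exact le_refl 0
    · intro k
      rw [key k (fun y i => D y i k)]
      exact Finset.prod_eq_one fun y _ => (hD y).2 k
  · intro j k
    dsimp only
    split
    · refine ⟨∏ y, Classical.choose (hrat y ((e j).2 y) k), ?_⟩
      push_cast
      exact Finset.prod_congr rfl fun y _ => Classical.choose_spec (hrat y ((e j).2 y) k)
    · exact ⟨0, by norm_num⟩
  · intro x
    constructor
    · intro i j; dsimp only; split <;> norm_num
    · intro j; simp
  · intro x i j; dsimp only; split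
    · right; rfl
    · left; rfl
  · intro x
    ext i k
    show (∑ j : Fin Ω, (if (e j).2 x = i then (1:ℝ) else 0) *
        (if (e j).1 = k then ∏ y, D y ((e j).2 y) k else 0)) = D x i k
    set g : Fin m → Fin d → ℝ :=
      fun y' i' => if y' = x then (if i' = i then D y' i' k else 0) else D y' i' k with hg
    have h1 : ∀ j : Fin Ω,
        (if (e j).2 x = i then (1:ℝ) else 0) *
          (if (e j).1 = k then ∏ y, D y ((e j).2 y) k else 0)
        = (if (e j).1 = k then ∏ y, g y ((e j).2 y) else 0) := by
      intro j
      by_cases h : (e j).1 = k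
      · simp only [h, if_true]
        by_cases h2 : (e j).2 x = i
        · simp only [h2, if_true, one_mul]
          refine Finset.prod_congr rfl fun y _ => ?_
          by_cases hy : y = x
          · subst hy; simp [hg, h2]
          · simp [hg, hy]
        · simp only [h2, if_false, zero_mul]
          rw [eq_comm]
          apply Finset.prod_eq_zero (Finset.mem_univ x)
          simp [hg, h2]
      · simp [h]
    rw [Finset.sum_congr rfl (fun j _ => h1 j), key k g]
    have h3 : ∀ y : Fin m, (∑ i', g y i') = if y = x then D x i k else 1 := by
      intro y
      by_cases hy : y = x
      · subst hy
        simp only [hg, if_true]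
        simp [Finset.sum_ite_eq' Finset.univ i (fun i' => D y i' k)]
      · simp only [hg, hy, if_false]
        exact (hD y).2 k
    simp only [h3]
    rw [Finset.prod_ite_eq' Finset.univ x (fun _ => D x i k)]
    simp
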